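/- arXiv:2407.19115 — 4 statements merged into one kernel-verified Lean document; each statement's English description precedes it below -/
import Mathlib

section
/- Global convergence of DEER (Newton's method) in at most T iterations: if f : ℝ^D → ℝ^D is differentiable, then for any initial guess s^{(0)} ∈ (ℝ^D)^T, the Newton iteration s^{(i+1)} = s^{(i)} - J(s^{(i)})^{-1} r(s^{(i)}) satisfies s^{(i)}_t = s*_t for all t ≤ i, where s* is the true trace; in particular s^{(T)} = s*. -/
open Matrix

noncomputable def Df (D : ℕ) (f : (Fin D → ℝ) → (Fin D → ℝ)) (x : Fin D → ℝ) :
    Matrix (Fin D) (Fin D) ℝ :=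
  LinearMap.toMatrix' (fderiv ℝ f x).toLinearMap

noncomputable def Jmat (D T : ℕ) (f : (Fin D → ℝ) → (Fin D → ℝ))
    (s : Fin T → Fin D → ℝ) : Matrix (Fin T × Fin D) (Fin T × Fin D) ℝ :=
  fun p q =>
    if p.1 = q.1 then (if p.2 = q.2 then (1 : ℝ) else 0)
    else if (p.1 : ℕ) = (q.1 : ℕ) + 1 then -(Df D f (s q.1) p.2 q.2)
    else 0

def resid (D T : ℕ) (f : (Fin D → ℝ) → (Fin D → ℝ)) (s0 : Fin D → ℝ)
    (s : Fin T → Fin D → ℝ) (t : Fin T) : Fin D → ℝ :=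
  s t - f (if _h : (t : ℕ) = 0 then s0
           else s ⟨(t : ℕ) - 1, lt_of_le_of_lt (Nat.sub_le _ _) t.isLt⟩)

/-- The true trace: `s*₀ = s₀` and `s*_{n+1} = f (s*_n)`. -/
def trueTrace (D : ℕ) (f : (Fin D → ℝ) → (Fin D → ℝ)) (s0 : Fin D → ℝ) : ℕ → Fin D → ℝ
  | 0 => s0
  | n + 1 => f (trueTrace D f s0 n)

lemma Jmat_det (D T : ℕ) (f : (Fin D → ℝ) → (Fin D → ℝ)) (s : Fin T → Fin D → ℝ) :
    (Jmat D T f s).det = 1 := by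
  rw [← Matrix.det_transpose]
  have hbt : ((Jmat D T f s)ᵀ).BlockTriangular Prod.fst := by
    intro p q hlt
    have h1 : ¬ (q.1 = p.1) := ne_of_lt hlt
    have h2 : ¬ ((q.1 : ℕ) = (p.1 : ℕ) + 1) := by
      have := Fin.lt_iff_val_lt_val.mp hlt
      omega
    simp only [Matrix.transpose_apply, Jmat, if_neg h1, if_neg h2]
  rw [hbt.det]
  apply Finset.prod_eq_one
  intro a _
  have h : ((Jmat D T f s)ᵀ).toSquareBlock Prod.fst a = 1 := by
    ext ⟨p, hp⟩ ⟨q, hq⟩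
    have h1 : q.1 = p.1 := hq.trans hp.symm
    simp only [Matrix.toSquareBlock_def, Matrix.transpose_apply, Jmat, if_pos h1,
      Matrix.one_apply, Subtype.mk.injEq, Prod.ext_iff, h1]
    split_ifs with ha hb hb <;> simp_all <;> tauto
  rw [h, Matrix.det_one]

lemma Jmat_mulVec (D T : ℕ) (f : (Fin D → ℝ) → (Fin D → ℝ)) (s : Fin T → Fin D → ℝ)
    (w : Fin T × Fin D → ℝ) (t : Fin T) (d : Fin D) :
    (Jmat D T f s *ᵥ w) (t, d) =
      w (t, d) - (if h : (t : ℕ) = 0 then 0 else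
        (Df D f (s ⟨(t : ℕ) - 1, lt_of_le_of_lt (Nat.sub_le _ _) t.isLt⟩) *ᵥ
          fun e => w (⟨(t : ℕ) - 1, lt_of_le_of_lt (Nat.sub_le _ _) t.isLt⟩, e)) d) := by
  have expand : (Jmat D T f s *ᵥ w) (t, d) =
      ∑ u : Fin T, ∑ e : Fin D, Jmat D T f s (t, d) (u, e) * w (u, e) := by
    simp [Matrix.mulVec, dotProduct, Fintype.sum_prod_type]
  rw [expand]
  have step1 : ∀ u : Fin T, (∑ e : Fin D, Jmat D T f s (t, d) (u, e) * w (u, e)) =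
      (if t = u then w (u, d) else 0) +
      (if (t : ℕ) = (u : ℕ) + 1 then -((Df D f (s u) *ᵥ fun e => w (u, e)) d) else 0) := by
    intro u
    by_cases h1 : t = u
    · have h2 : ¬ ((t : ℕ) = (u : ℕ) + 1) := by omega
      simp [Jmat, h1, h2, ite_mul, Finset.sum_ite_eq]
    · by_cases h2 : (t : ℕ) = (u : ℕ) + 1
      · simp [Jmat, h1, h2, Matrix.mulVec, dotProduct, Finset.sum_neg_distrib, neg_mul]
      · simp [Jmat, h1, h2]
  rw [Finset.sum_congr rfl (fun u _ => step1 u), Finset.sum_add_distrib]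
  congr 1
  · simp [Finset.sum_ite_eq]
  · by_cases h : (t : ℕ) = 0
    · rw [dif_pos h, neg_zero]
      apply Finset.sum_eq_zero
      intro u _
      rw [if_neg (by omega)]
    · rw [dif_neg h]
      set tp : Fin T := ⟨(t : ℕ) - 1, lt_of_le_of_lt (Nat.sub_le _ _) t.isLt⟩ with htp
      have hcond : ∀ u : Fin T, ((t : ℕ) = (u : ℕ) + 1) ↔ u = tp := by
        intro u
        constructor
        · intro hu; apply Fin.ext; simp [htp]; omega
        · intro hu; subst hu; simp [htp]; omega
      calc (∑ u : Fin T, if (t : ℕ) = (u : ℕ) + 1 then -((Df D f (s u) *ᵥ fun e => w (u, e)) d) else 0)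
          = ∑ u : Fin T, if u = tp then -((Df D f (s u) *ᵥ fun e => w (u, e)) d) else 0 := by
            apply Finset.sum_congr rfl; intro u _; rw [if_congr (hcond u) rfl rfl]
        _ = -((Df D f (s tp) *ᵥ fun e => w (tp, e)) d) := by simp [Finset.sum_ite_eq']

/-- global convergence of DEER (Newton's method) in at most `T` iterations:
after `i` Newton iterations the first `i` entries of the trace are exact; in particular
`s^{(T)} = s*`. -/
theorem deer_global_convergence (D T : ℕ) (f : (Fin D → ℝ) → (Fin D → ℝ))
    (hf : Differentiable ℝ f) (s0 : Fin D → ℝ)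
    (seq : ℕ → Fin T → Fin D → ℝ)
    (hiter : ∀ i : ℕ,
      (fun p : Fin T × Fin D => seq (i + 1) p.1 p.2) =
        (fun p : Fin T × Fin D => seq i p.1 p.2) -
          (Jmat D T f (seq i))⁻¹ *ᵥ (fun p : Fin T × Fin D => resid D T f s0 (seq i) p.1 p.2)) :
    (∀ i : ℕ, ∀ t : Fin T, (t : ℕ) < i → seq i t = trueTrace D f s0 ((t : ℕ) + 1)) ∧
    (∀ t : Fin T, seq T t = trueTrace D f s0 ((t : ℕ) + 1)) := by
  -- key per-row equation of the Newton step
  have key : ∀ i : ℕ, ∀ t : Fin T, ∀ d : Fin D,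
      seq (i + 1) t d =
        f (if _h : (t : ℕ) = 0 then s0
           else seq i ⟨(t : ℕ) - 1, lt_of_le_of_lt (Nat.sub_le _ _) t.isLt⟩) d -
        (if h : (t : ℕ) = 0 then 0 else
          (Df D f (seq i ⟨(t : ℕ) - 1, lt_of_le_of_lt (Nat.sub_le _ _) t.isLt⟩) *ᵥ
            fun e => seq i ⟨(t : ℕ) - 1, lt_of_le_of_lt (Nat.sub_le _ _) t.isLt⟩ e
              - seq (i + 1) ⟨(t : ℕ) - 1, lt_of_le_of_lt (Nat.sub_le _ _) t.isLt⟩ e) d) := by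
    intro i t d
    have hdet : IsUnit (Jmat D T f (seq i)).det := by
      rw [Jmat_det]; exact isUnit_one
    have hdiff : (fun p : Fin T × Fin D => seq i p.1 p.2) -
        (fun p : Fin T × Fin D => seq (i + 1) p.1 p.2) =
        (Jmat D T f (seq i))⁻¹ *ᵥ (fun p : Fin T × Fin D => resid D T f s0 (seq i) p.1 p.2) := by
      rw [hiter i]; abel
    have hJ : Jmat D T f (seq i) *ᵥ
        ((fun p : Fin T × Fin D => seq i p.1 p.2) -
         (fun p : Fin T × Fin D => seq (i + 1) p.1 p.2)) =
        (fun p : Fin T × Fin D => resid D T f s0 (seq i) p.1 p.2) := by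
      rw [hdiff, Matrix.mulVec_mulVec, Matrix.mul_nonsing_inv _ hdet, Matrix.one_mulVec]
    have hrow := congrFun hJ (t, d)
    rw [Jmat_mulVec] at hrow
    have hres : resid D T f s0 (seq i) t d =
        seq i t d - f (if _h : (t : ℕ) = 0 then s0
          else seq i ⟨(t : ℕ) - 1, lt_of_le_of_lt (Nat.sub_le _ _) t.isLt⟩) d := rfl
    simp only [Pi.sub_apply] at hrow
    rw [hres] at hrow
    linarith [hrow]
  have main : ∀ i : ℕ, ∀ t : Fin T, (t : ℕ) < i → seq i t = trueTrace D f s0 ((t : ℕ) + 1) := by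
    intro i
    induction i with
    | zero => intro t ht; omega
    | succ i ih =>
      have inner : ∀ n : ℕ, ∀ t : Fin T, (t : ℕ) ≤ n → (t : ℕ) < i + 1 →
          seq (i + 1) t = trueTrace D f s0 ((t : ℕ) + 1) := by
        intro n
        induction n with
        | zero =>
          intro t hle _
          have h0 : (t : ℕ) = 0 := Nat.le_zero.mp hle
          funext d
          rw [key i t d, dif_pos h0, dif_pos h0, sub_zero, h0]
          rfl
        | succ n ihn =>
          intro t hle hlt
          by_cases h0 : (t : ℕ) = 0
          · funext d
            rw [key i t d, dif_pos h0, dif_pos h0, sub_zero, h0]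
            rfl
          · set tp : Fin T := ⟨(t : ℕ) - 1, lt_of_le_of_lt (Nat.sub_le _ _) t.isLt⟩ with htp
            have htpv : (tp : ℕ) = (t : ℕ) - 1 := rfl
            have h1 : seq i tp = trueTrace D f s0 ((tp : ℕ) + 1) := ih tp (by omega)
            have h2 : seq (i + 1) tp = trueTrace D f s0 ((tp : ℕ) + 1) :=
              ihn tp (by omega) (by omega)
            funext d
            rw [key i t d, dif_neg h0, dif_neg h0]
            have hz : (fun e => seq i tp e - seq (i + 1) tp e) = 0 := by
              funext e; rw [h1, h2]; simp
            rw [hz, Matrix.mulVec_zero, Pi.zero_apply, sub_zero, h1]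
            have ht : (t : ℕ) + 1 = ((tp : ℕ) + 1) + 1 := by omega
            rw [ht]
            rfl
      intro t ht
      exact inner (t : ℕ) t le_rfl ht
  exact ⟨main, fun t => main T t t.isLt⟩
end

section
/- Finite-step convergence of quasi-Newton DEER with arbitrary matrices: let (M_t^{(i)})_{t=2..T} be any family of D×D matrices (possibly changing each iteration), and define the update Δ₁^{(i+1)} = -r₁(s^{(i)}), Δ_t^{(i+1)} = M_t^{(i)} Δ_{t-1}^{(i+1)} - r_t(s^{(i)}), with s^{(i+1)} = s^{(i)} + Δ^{(i+1)}. Then s^{(i)}_t = s*_t for all t ≤ i, so the iteration converges to the true trace s* in at most T iterations. -/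
open Matrix

/-- quasi-Newton DEER with arbitrary matrices `M_t^{(i)}` replacing the
Jacobians still converges to the true trace in at most `T` iterations: after `i`
iterations the first `i` entries are exact. -/
theorem quasi_deer_global_convergence (D T : ℕ) (f : (Fin D → ℝ) → (Fin D → ℝ))
    (s0 : Fin D → ℝ)
    (M : ℕ → Fin T → Matrix (Fin D) (Fin D) ℝ)
    (seq : ℕ → Fin T → Fin D → ℝ)
    (Δ : ℕ → Fin T → Fin D → ℝ)
    (hΔ0 : ∀ i : ℕ, ∀ t : Fin T, (t : ℕ) = 0 →
      Δ (i + 1) t = -(resid D T f s0 (seq i) t))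
    (hΔ : ∀ i : ℕ, ∀ t : Fin T, (t : ℕ) ≠ 0 →
      Δ (i + 1) t =
        (M i t) *ᵥ (Δ (i + 1) ⟨(t : ℕ) - 1, lt_of_le_of_lt (Nat.sub_le _ _) t.isLt⟩)
          - resid D T f s0 (seq i) t)
    (hstep : ∀ i : ℕ, seq (i + 1) = seq i + Δ (i + 1)) :
    (∀ i : ℕ, ∀ t : Fin T, (t : ℕ) < i → seq i t = trueTrace D f s0 ((t : ℕ) + 1)) ∧
    (∀ t : Fin T, seq T t = trueTrace D f s0 ((t : ℕ) + 1)) := by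
  have main : ∀ i : ℕ, ∀ t : Fin T, (t : ℕ) < i →
      seq i t = trueTrace D f s0 ((t : ℕ) + 1) := by
    intro i
    induction i with
    | zero => intro t ht; omega
    | succ i ih =>
      have inner : ∀ n : ℕ, ∀ t : Fin T, (t : ℕ) = n → (t : ℕ) < i + 1 →
          seq (i + 1) t = trueTrace D f s0 ((t : ℕ) + 1) := by
        intro n
        induction n with
        | zero =>
          intro t ht _
          have hres : resid D T f s0 (seq i) t = seq i t - f s0 := by
            simp [resid, ht]
          have hs : seq (i + 1) t = seq i t + Δ (i + 1) t := by
            rw [hstep i]; rfl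
          rw [hs, hΔ0 i t ht, hres, ht]
          simp [trueTrace]
        | succ n ihn =>
          intro t ht htlt
          have ht0 : (t : ℕ) ≠ 0 := by omega
          set t' : Fin T := ⟨(t : ℕ) - 1, lt_of_le_of_lt (Nat.sub_le _ _) t.isLt⟩
            with ht'def
          have ht'val : (t' : ℕ) = n := by simp [ht'def, ht]
          have ht'lt : (t' : ℕ) < i := by omega
          have h1 : seq i t' = trueTrace D f s0 ((t' : ℕ) + 1) := ih t' ht'lt
          have h2 : seq (i + 1) t' = trueTrace D f s0 ((t' : ℕ) + 1) :=
            ihn t' ht'val (by omega)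
          have hs' : seq (i + 1) t' = seq i t' + Δ (i + 1) t' := by
            rw [hstep i]; rfl
          have hΔz : Δ (i + 1) t' = 0 := by
            have h3 := hs'
            rw [h2, h1] at h3
            have := h3.symm
            rwa [add_eq_left] at this
          have hres : resid D T f s0 (seq i) t
              = seq i t - trueTrace D f s0 ((t : ℕ) + 1) := by
            have htt : (t' : ℕ) + 1 + 1 = (t : ℕ) + 1 := by omega
            rw [resid, dif_neg ht0, ← ht'def, h1]
            have : f (trueTrace D f s0 ((t' : ℕ) + 1))
                = trueTrace D f s0 ((t' : ℕ) + 1 + 1) := rfl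
            rw [this, htt]
          have hs : seq (i + 1) t = seq i t + Δ (i + 1) t := by
            rw [hstep i]; rfl
          rw [hs, hΔ i t ht0, ← ht'def, hΔz, hres]
          simp
      intro t ht
      exact inner (t : ℕ) t rfl ht
  exact ⟨main, fun t => main T t t.isLt⟩
end

section
/- Monotonicity of the damped step size: for J ∈ ℝ^{m×n}, r ∈ ℝ^m, the norm ‖Δ(λ)‖ of the Levenberg-Marquardt minimizer Δ(λ) = -(JᵀJ + λI)^{-1} Jᵀ r is nonincreasing in λ on (0, ∞). -/
open Matrix

/-- Euclidean norm of a vector in `ℝ^n`. -/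
noncomputable def euclNorm (n : ℕ) (v : Fin n → ℝ) : ℝ :=
  Real.sqrt (∑ i : Fin n, (v i) ^ 2)

namespace LMAux

variable {m n : ℕ}

/-- The quadratic objective (up to the constant `‖r‖²`):
`h lam v = 2⟨b, v⟩ + ⟨v, A v⟩ + lam ⟨v, v⟩`. -/
noncomputable def obj (A : Matrix (Fin n) (Fin n) ℝ) (b : Fin n → ℝ) (lam : ℝ)
    (v : Fin n → ℝ) : ℝ :=
  2 * (b ⬝ᵥ v) + v ⬝ᵥ (A *ᵥ v) + lam * (v ⬝ᵥ v)

lemma symm_dot {A : Matrix (Fin n) (Fin n) ℝ} (hA : Aᵀ = A) (x y : Fin n → ℝ) :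
    x ⬝ᵥ A *ᵥ y = y ⬝ᵥ A *ᵥ x := by
  rw [dotProduct_mulVec, ← mulVec_transpose, hA, dotProduct_comm]

lemma dot_self_nonneg (v : Fin n → ℝ) : 0 ≤ v ⬝ᵥ v :=
  Finset.sum_nonneg fun i _ => mul_self_nonneg _

lemma posDef_B (J : Matrix (Fin m) (Fin n) ℝ) {lam : ℝ} (hlam : 0 < lam) :
    (Jᵀ * J + lam • (1 : Matrix (Fin n) (Fin n) ℝ)).PosDef := by
  have hA : (Jᵀ * J).PosSemidef := by
    have := Matrix.posSemidef_conjTranspose_mul_self J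
    rwa [Matrix.conjTranspose_eq_transpose_of_trivial] at this
  have hI : (lam • (1 : Matrix (Fin n) (Fin n) ℝ)).PosDef := by
    rw [Matrix.smul_one_eq_diagonal]
    exact Matrix.PosDef.diagonal fun _ => hlam
  exact Matrix.PosDef.posSemidef_add hA hI

/-- The LM step is the minimizer of the quadratic objective. -/
lemma min_obj (J : Matrix (Fin m) (Fin n) ℝ) (r : Fin m → ℝ) {lam : ℝ} (hlam : 0 < lam)
    (Δ : Fin n → ℝ) :
    obj (Jᵀ * J) (Jᵀ *ᵥ r)  lam
        (-((Jᵀ * J + lam • (1 : Matrix (Fin n) (Fin n) ℝ))⁻¹ *ᵥ (Jᵀ *ᵥ r))) ≤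
      obj (Jᵀ * J) (Jᵀ *ᵥ r) lam Δ := by
  set A := Jᵀ * J with hAdef
  set b := Jᵀ *ᵥ r with hbdef
  set B := A + lam • (1 : Matrix (Fin n) (Fin n) ℝ) with hBdef
  set x := -(B⁻¹ *ᵥ b) with hxdef
  have hA : A.PosSemidef := by
    have := Matrix.posSemidef_conjTranspose_mul_self J
    rwa [Matrix.conjTranspose_eq_transpose_of_trivial] at this
  have hAT : Aᵀ = A := hA.isHermitian
  have hB : B.PosDef := posDef_B J hlam
  have hBx : B *ᵥ x = -b := by
    rw [hxdef, mulVec_neg, mulVec_mulVec, Matrix.mul_nonsing_inv _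
      ((Matrix.isUnit_iff_isUnit_det _).mp hB.isUnit), one_mulVec]
  have hb : b = -(A *ᵥ x) - lam • x := by
    have : A *ᵥ x + lam • x = -b := by
      rw [← hBx, hBdef, add_mulVec, smul_mulVec, one_mulVec]
    funext i
    have h := congrFun this i
    simp only [Pi.add_apply, Pi.smul_apply, Pi.neg_apply, Pi.sub_apply, smul_eq_mul] at h ⊢
    linarith
  -- the difference is the positive quadratic form evaluated at Δ - x
  have key : obj A b lam Δ - obj A b lam x
      = (Δ - x) ⬝ᵥ (A *ᵥ (Δ - x)) + lam * ((Δ - x) ⬝ᵥ (Δ - x)) := by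
    have h1 : x ⬝ᵥ (A *ᵥ Δ) = Δ ⬝ᵥ (A *ᵥ x) := symm_dot hAT x Δ
    have h2 : x ⬝ᵥ Δ = Δ ⬝ᵥ x := dotProduct_comm x Δ
    have h3 : (A *ᵥ x) ⬝ᵥ Δ = Δ ⬝ᵥ (A *ᵥ x) := dotProduct_comm _ _
    have h5 : (A *ᵥ x) ⬝ᵥ x = x ⬝ᵥ (A *ᵥ x) := dotProduct_comm _ _
    simp only [obj, hb, mulVec_sub, dotProduct_sub, sub_dotProduct, neg_dotProduct,
      dotProduct_neg, smul_dotProduct, dotProduct_smul, smul_eq_mul, neg_neg]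
    have h2' : lam * (x ⬝ᵥ Δ) = lam * (Δ ⬝ᵥ x) := by rw [h2]
    linarith [h1, h2', h3, h5]
  have hq1 : 0 ≤ (Δ - x) ⬝ᵥ (A *ᵥ (Δ - x)) := by
    have := hA.dotProduct_mulVec_nonneg (Δ - x)
    simpa using this
  have hq2 : 0 ≤ lam * ((Δ - x) ⬝ᵥ (Δ - x)) :=
    mul_nonneg hlam.le (dot_self_nonneg _)
  linarith [key, hq1, hq2]

end LMAux

/-- the Euclidean norm of the Levenberg-Marquardt step
`Δ(λ) = -(JᵀJ + λI)⁻¹ Jᵀ r` is nonincreasing in `λ` on `(0, ∞)`. -/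
theorem lm_step_norm_antitone (m n : ℕ) (J : Matrix (Fin m) (Fin n) ℝ) (r : Fin m → ℝ) :
    ∀ lam₁ lam₂ : ℝ, 0 < lam₁ → lam₁ ≤ lam₂ →
      euclNorm n (-((Jᵀ * J + lam₂ • (1 : Matrix (Fin n) (Fin n) ℝ))⁻¹ *ᵥ (Jᵀ *ᵥ r))) ≤
        euclNorm n (-((Jᵀ * J + lam₁ • (1 : Matrix (Fin n) (Fin n) ℝ))⁻¹ *ᵥ (Jᵀ *ᵥ r))) := by
  intro lam₁ lam₂ h1 h12
  rcases eq_or_lt_of_le h12 with rfl | hlt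
  · exact le_refl _
  have h2 : 0 < lam₂ := h1.trans hlt
  set x₁ := -((Jᵀ * J + lam₁ • (1 : Matrix (Fin n) (Fin n) ℝ))⁻¹ *ᵥ (Jᵀ *ᵥ r)) with hx1
  set x₂ := -((Jᵀ * J + lam₂ • (1 : Matrix (Fin n) (Fin n) ℝ))⁻¹ *ᵥ (Jᵀ *ᵥ r)) with hx2
  have m12 := LMAux.min_obj J r h1 x₂
  have m21 := LMAux.min_obj J r h2 x₁
  rw [← hx1] at m12
  rw [← hx2] at m21
  have hs : x₂ ⬝ᵥ x₂ ≤ x₁ ⬝ᵥ x₁ := by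
    simp only [LMAux.obj] at m12 m21
    nlinarith [m12, m21, hlt]
  have hnorm : ∀ v : Fin n → ℝ, euclNorm n v = Real.sqrt (v ⬝ᵥ v) := by
    intro v
    simp [euclNorm, dotProduct, sq]
  rw [hnorm, hnorm]
  exact Real.sqrt_le_sqrt hs
end

section
/- Diagonal quasi-DEER recurrence is the exact Newton recurrence for diagonal dynamics: if Df(s_{t-1}) is a diagonal matrix with diagonal vector d_{t-1} for each t, then the Newton update Δ satisfies the componentwise recurrence Δ_{t,j} = d_{t-1,j} · Δ_{t-1,j} - r_{t,j}(s) for each coordinate j, requiring only elementwise products. -/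
open Matrix

/-- if the dynamics Jacobians are diagonal, `Df(s_{t-1}) = diag(d_t)`, then
the Newton update `Δ` (solving `J(s)Δ = -r(s)`) satisfies the componentwise recurrence
`Δ_{t,j} = d_{t,j} Δ_{t-1,j} - r_{t,j}`, requiring only elementwise products. -/
theorem diagonal_quasi_deer_exact (D T : ℕ) (f : (Fin D → ℝ) → (Fin D → ℝ))
    (hf : Differentiable ℝ f) (s0 : Fin D → ℝ) (s : Fin T → Fin D → ℝ)
    (d : Fin T → Fin D → ℝ)
    (hdiag : ∀ t : Fin T, (t : ℕ) ≠ 0 →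
      Df D f (s ⟨(t : ℕ) - 1, lt_of_le_of_lt (Nat.sub_le _ _) t.isLt⟩) =
        Matrix.diagonal (d t))
    (Δ : Fin T → Fin D → ℝ)
    (hΔ : (Jmat D T f s) *ᵥ (fun p : Fin T × Fin D => Δ p.1 p.2) =
      fun p : Fin T × Fin D => -(resid D T f s0 s p.1 p.2)) :
    (∀ t : Fin T, (t : ℕ) = 0 → Δ t = -(resid D T f s0 s t)) ∧
    (∀ t : Fin T, (t : ℕ) ≠ 0 → ∀ j : Fin D,
      Δ t j =
        d t j * Δ ⟨(t : ℕ) - 1, lt_of_le_of_lt (Nat.sub_le _ _) t.isLt⟩ j -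
          resid D T f s0 s t j) := by

  have main : ∀ t : Fin T, ∀ j : Fin D,
      ∑ q : Fin T × Fin D, Jmat D T f s (t, j) q * Δ q.1 q.2 =
        -(resid D T f s0 s t j) := by
    intro t j
    have h := congrFun hΔ (t, j)
    simpa [Matrix.mulVec, dotProduct] using h
  constructor
  · intro t ht
    funext j
    have h := main t j
    rw [Fintype.sum_prod_type] at h
    have key : ∀ u : Fin T, (∑ k, Jmat D T f s (t, j) (u, k) * Δ u k) =
        if u = t then Δ t j else 0 := by
      intro u
      by_cases hu : t = u
      · subst hu
        simp [Jmat, ite_mul, Finset.sum_ite_eq]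
      · have h2 : (t : ℕ) ≠ (u : ℕ) + 1 := by omega
        simp [Jmat, hu, h2, Ne.symm hu]
    rw [Finset.sum_congr rfl (fun u _ => key u), Finset.sum_ite_eq' _ t] at h
    simpa using h
  · intro t ht j
    set t' : Fin T := ⟨(t : ℕ) - 1, lt_of_le_of_lt (Nat.sub_le _ _) t.isLt⟩ with ht'
    have hval : (t' : ℕ) = (t : ℕ) - 1 := rfl
    have hdt : Df D f (s t') = Matrix.diagonal (d t) := hdiag t ht
    have htne : t ≠ t' := by
      intro hcontra
      have := congrArg (Fin.val) hcontra
      omega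
    have h := main t j
    rw [Fintype.sum_prod_type] at h
    have key : ∀ u : Fin T, (∑ k, Jmat D T f s (t, j) (u, k) * Δ u k) =
        (if u = t then Δ t j else 0) +
        (if u = t' then -(d t j * Δ t' j) else 0) := by
      intro u
      by_cases hu : t = u
      · subst hu
        rw [if_neg htne]
        simp [Jmat, ite_mul, Finset.sum_ite_eq]
      · by_cases h2 : (t : ℕ) = (u : ℕ) + 1
        · have hu' : u = t' := by
            apply Fin.ext
            omega
          subst hu'
          simp only [Jmat, if_neg hu, if_pos h2, hdt]
          simp [Matrix.diagonal_apply, ite_mul, Finset.sum_ite_eq, apply_ite Neg.neg,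
            if_neg (Ne.symm hu)]
        · have hu3 : u ≠ t' := by
            intro hcontra
            apply h2
            have := congrArg (Fin.val) hcontra
            omega
          simp [Jmat, hu, h2, Ne.symm hu, hu3]
    rw [Finset.sum_congr rfl (fun u _ => key u), Finset.sum_add_distrib,
      Finset.sum_ite_eq' _ t, Finset.sum_ite_eq' _ t'] at h
    simp only [Finset.mem_univ, if_true] at h
    linarith
end
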